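/- Let G be a 3-regular graph with vertex set V and edge set E'. Construct a delegation graph with: a vertex voter for each v ∈ V, an edge voter for each e ∈ E' with edges to the vertex voters of e's endpoints, a dummy voter D_v for each v ∈ V with an edge from the vertex voter of v to D_v, and two extra voters pointing only to each D_v. Dummy voters have voting cost 0, all other voters have voting cost 1; all delegating costs are 0. Then G has a vertex cover of size at most k if and only if this cLD election has a feasible solution of cost at most k in which every casting voter has voting power (number of represented voters plus themself) at most 4. -/
import Mathlib


/-- One delegation step along the selected edge. -/
def dStep {α : Type} (Dn : α → Option α) (a b : α) : Prop := Dn a = some b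

/-- Voting power of a casting voter `j`: the number of voters whose delegation
path leads to `j` (including `j` itself). -/
noncomputable def votingPower {α : Type} (Dn : α → Option α) (j : α) : ℕ :=
  Set.ncard {i | Relation.ReflTransGen (dStep Dn) i j}

/-- Voters of the Bounded Power reduction from Vertex Cover on a 3-regular
graph `G`: a vertex voter per vertex of `G`, an edge voter per edge of `G`, a
dummy voter per vertex of `G`, and two extra voters per dummy voter. -/
inductive W (V : Type) (G : SimpleGraph V) where
  | vert : V → W V G
  | edg : G.edgeSet → W V G
  | dum : V → W V G
  | extra : V → Bool → W V G
deriving DecidableEq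

/-- Delegation edges of the reduction: each edge voter points to the vertex
voters of its two endpoints, each vertex voter points to its dummy voter, and
the two extra voters attached to a dummy voter point to it. -/
inductive WEdge {V : Type} (G : SimpleGraph V) : W V G → W V G → Prop
  | ev (e : G.edgeSet) (u : V) (h : u ∈ (e : Sym2 V)) : WEdge G (.edg e) (.vert u)
  | vd (u : V) : WEdge G (.vert u) (.dum u)
  | xd (u : V) (b : Bool) : WEdge G (.extra u b) (.dum u)

/-- Voting cost: dummy voters vote for free, everyone else at cost 1.
(All delegating costs are 0.) -/
def wCost {V : Type} {G : SimpleGraph V} : W V G → ℕ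
  | .dum _ => 0
  | _ => 1

instance instFiniteW {V : Type} [Finite V] {G : SimpleGraph V} : Finite (W V G) := by
  have : Finite G.edgeSet := Subtype.finite
  exact Finite.of_injective
    (fun w : W V G => match w with
      | .vert u => Sum.inl u
      | .edg e => Sum.inr (Sum.inl e)
      | .dum u => Sum.inr (Sum.inr (Sum.inl u))
      | .extra u b => (Sum.inr (Sum.inr (Sum.inr (u, b))) : V ⊕ G.edgeSet ⊕ V ⊕ V × Bool))
    (by rintro ⟨⟩ ⟨⟩ h <;> simp_all)

/-- The delegation function used in the forward direction. -/
def fwdDn {V : Type} [DecidableEq V] {G : SimpleGraph V} (S : Finset V)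
    (f : G.edgeSet → V) : W V G → Option (W V G)
  | .vert u => if u ∈ S then none else some (.dum u)
  | .edg e => some (.vert (f e))
  | .dum _ => none
  | .extra u _ => some (.dum u)

section fwd

variable {V : Type} [DecidableEq V] {G : SimpleGraph V} {S : Finset V} {f : G.edgeSet → V}

lemma fwd_step_edg {i : W V G} {e : G.edgeSet} (h : fwdDn S f i = some (.edg e)) : False := by
  rcases i with u | e' | u | ⟨u, b⟩ <;> simp [fwdDn] at h

lemma fwd_reach_edg {i : W V G} {e : G.edgeSet}
    (h : Relation.ReflTransGen (dStep (fwdDn S f)) i (.edg e)) : i = .edg e := by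
  rcases h.cases_tail with h | ⟨c, _, hc⟩
  · exact h.symm
  · exact absurd hc fwd_step_edg

lemma fwd_step_vert {i : W V G} {u : V} (h : fwdDn S f i = some (.vert u)) :
    ∃ e, i = .edg e ∧ f e = u := by
  rcases i with w | e' | w | ⟨w, b⟩ <;> simp [fwdDn] at h
  exact ⟨e', rfl, h⟩

lemma fwd_reach_vert {i : W V G} {u : V}
    (h : Relation.ReflTransGen (dStep (fwdDn S f)) i (.vert u)) :
    i = .vert u ∨ ∃ e, i = .edg e ∧ f e = u := by
  rcases h.cases_tail with h | ⟨c, hic, hc⟩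
  · exact Or.inl h.symm
  · obtain ⟨e, rfl, hfe⟩ := fwd_step_vert hc
    exact Or.inr ⟨e, fwd_reach_edg hic, hfe⟩

lemma fwd_step_dum {i : W V G} {u : V} (h : fwdDn S f i = some (.dum u)) :
    (i = .vert u ∧ u ∉ S) ∨ ∃ b, i = .extra u b := by
  rcases i with w | e' | w | ⟨w, b⟩ <;> simp [fwdDn] at h
  · obtain ⟨h1, rfl⟩ := h
    exact Or.inl ⟨rfl, h1⟩
  · obtain rfl := h
    exact Or.inr ⟨b, rfl⟩

lemma fwd_reach_dum (hf : ∀ e, f e ∈ S) {i : W V G} {u : V}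
    (h : Relation.ReflTransGen (dStep (fwdDn S f)) i (.dum u)) :
    i ∈ ({.dum u, .vert u, .extra u true, .extra u false} : Set (W V G)) := by
  rcases h.cases_tail with h | ⟨c, hic, hc⟩
  · simp [h.symm]
  · rcases fwd_step_dum hc with ⟨rfl, huS⟩ | ⟨b, rfl⟩
    · rcases fwd_reach_vert hic with rfl | ⟨e, rfl, hfe⟩
      · simp
      · exact absurd (hfe ▸ hf e) huS
    · rcases (hic.cases_tail) with h | ⟨c, _, hc⟩
      · rcases b <;> simp [h.symm]
      · exfalso
        rcases c with w | e' | w | ⟨w, b'⟩ <;> simp [dStep, fwdDn] at hc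

lemma ncard_four_le {α : Type*} (a b c d : α) : ({a, b, c, d} : Set α).ncard ≤ 4 := by
  calc ({a, b, c, d} : Set α).ncard ≤ ({b, c, d} : Set α).ncard + 1 := Set.ncard_insert_le _ _
    _ ≤ (({c, d} : Set α).ncard + 1) + 1 := by
        exact Nat.add_le_add_right (Set.ncard_insert_le _ _) 1
    _ ≤ ((({d} : Set α).ncard + 1) + 1) + 1 := by
        exact Nat.add_le_add_right (Nat.add_le_add_right (Set.ncard_insert_le _ _) 1) 1
    _ ≤ 4 := by simp

end fwd

/-- A 3-regular graph `G` has a vertex cover of size at most `k` iff the cLD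
election of the reduction has a feasible solution of cost at most `k` in which
every casting voter has voting power at most 4. -/
theorem vertex_cover_iff_bounded_power {V : Type} [Fintype V] [DecidableEq V]
    (G : SimpleGraph V) [DecidableRel G.Adj] (hreg : ∀ u : V, G.degree u = 3)
    (k : ℕ) :
    (∃ S : Finset V, S.card ≤ k ∧ ∀ e ∈ G.edgeSet, ∃ u ∈ S, u ∈ e) ↔
    (∃ (C : Finset (W V G)) (Dn : W V G → Option (W V G)),
      (∀ i, Dn i = none ↔ i ∈ C) ∧
      (∀ i j, Dn i = some j → WEdge G i j) ∧
      (∀ i, i ∉ C → ∃ j ∈ C, Relation.ReflTransGen (dStep Dn) i j) ∧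
      (∑ i ∈ C, wCost i) ≤ k ∧
      (∀ j ∈ C, votingPower Dn j ≤ 4)) := by
  classical
  constructor
  · rintro ⟨S, hSk, hcov⟩
    choose f hf1 hf2 using fun e : G.edgeSet => hcov e e.2
    refine ⟨S.image W.vert ∪ Finset.univ.image W.dum, fwdDn S f, ?_, ?_, ?_, ?_, ?_⟩
    · intro i
      rcases i with u | e | u | ⟨u, b⟩ <;>
        simp [fwdDn, Finset.mem_union, Finset.mem_image]
    · intro i j h
      rcases i with u | e | u | ⟨u, b⟩ <;> simp [fwdDn] at h
      · exact h.2 ▸ WEdge.vd u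
      · exact h ▸ WEdge.ev e (f e) (hf2 e)
      · exact h ▸ WEdge.xd u b
    · intro i hi
      rcases i with u | e | u | ⟨u, b⟩
      · by_cases huS : u ∈ S
        · exact absurd (by simp [Finset.mem_union, Finset.mem_image, huS]) hi
        · exact ⟨.dum u, by simp [Finset.mem_union, Finset.mem_image],
            Relation.ReflTransGen.single (by simp [dStep, fwdDn, huS])⟩
      · exact ⟨.vert (f e), by simp [Finset.mem_union, Finset.mem_image, hf1 e],
          Relation.ReflTransGen.single (by simp [dStep, fwdDn])⟩
      · exact absurd (by simp [Finset.mem_union, Finset.mem_image]) hi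
      · exact ⟨.dum u, by simp [Finset.mem_union, Finset.mem_image],
          Relation.ReflTransGen.single (by simp [dStep, fwdDn])⟩
    · have hdisj : Disjoint (S.image W.vert) (Finset.univ.image (W.dum (G := G))) := by
        rw [Finset.disjoint_left]
        intro a ha hb
        simp [Finset.mem_image] at ha hb
        obtain ⟨u, _, rfl⟩ := ha
        obtain ⟨w, hw⟩ := hb
        exact absurd hw (by simp)
      rw [Finset.sum_union hdisj,
        Finset.sum_image (fun a _ b _ h => by injection h),
        Finset.sum_image (fun a _ b _ h => by injection h)]
      simpa [wCost] using hSk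
    · intro j hj
      simp [Finset.mem_union, Finset.mem_image] at hj
      rcases hj with ⟨u, huS, rfl⟩ | ⟨u, rfl⟩
      · unfold votingPower
        have hsub : {i | Relation.ReflTransGen (dStep (fwdDn S f)) i (.vert u)} ⊆
            insert (W.vert u) (W.edg '' {e : G.edgeSet | u ∈ (e : Sym2 V)}) := by
          intro i hi
          rcases fwd_reach_vert hi with rfl | ⟨e, rfl, hfe⟩
          · exact Set.mem_insert _ _
          · exact Set.mem_insert_of_mem _ ⟨e, hfe ▸ hf2 e, rfl⟩
        have hcard : ({e : G.edgeSet | u ∈ (e : Sym2 V)} : Set G.edgeSet).ncard = 3 := by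
          have himg : (Subtype.val '' {e : G.edgeSet | u ∈ (e : Sym2 V)}) =
              G.incidenceSet u := by
            ext x
            simp [SimpleGraph.incidenceSet, and_comm]
          have := Set.ncard_image_of_injective
            {e : G.edgeSet | u ∈ (e : Sym2 V)} (Subtype.val_injective)
          rw [himg] at this
          rw [← this, Set.ncard_eq_toFinset_card', Set.toFinset_card,
            SimpleGraph.card_incidenceSet_eq_degree, hreg]
        calc Set.ncard {i | Relation.ReflTransGen (dStep (fwdDn S f)) i (.vert u)}
            ≤ (insert (W.vert u) (W.edg '' {e : G.edgeSet | u ∈ (e : Sym2 V)})).ncard :=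
              Set.ncard_le_ncard hsub (Set.toFinite _)
          _ ≤ (W.edg '' {e : G.edgeSet | u ∈ (e : Sym2 V)}).ncard + 1 :=
              Set.ncard_insert_le _ _
          _ ≤ 4 := by
              rw [Set.ncard_image_of_injective _ (fun a b h => by injection h), hcard]
      · unfold votingPower
        calc Set.ncard {i | Relation.ReflTransGen (dStep (fwdDn S f)) i (.dum u)}
            ≤ ({.dum u, .vert u, .extra u true, .extra u false} : Set (W V G)).ncard :=
              Set.ncard_le_ncard (fun i hi => fwd_reach_dum hf1 hi) (Set.toFinite _)
          _ ≤ 4 := ncard_four_le _ _ _ _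
  · rintro ⟨C, Dn, hnone, hval, hfeas, hcost, hpow⟩
    have hdum : ∀ u : V, W.dum u ∈ C := by
      intro u
      rcases h : Dn (W.dum u) with _ | j
      · exact (hnone _).1 h
      · cases hval _ _ h
    have hstep_vert : ∀ u : V, W.vert u ∉ C → Dn (W.vert u) = some (W.dum u) := by
      intro u hu
      rcases h : Dn (W.vert u) with _ | j
      · exact absurd ((hnone _).1 h) hu
      · cases hval _ _ h; rfl
    have hstep_extra : ∀ (u : V) (b : Bool), W.extra u b ∉ C →
        Dn (W.extra u b) = some (W.dum u) := by
      intro u b hu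
      rcases h : Dn (W.extra u b) with _ | j
      · exact absurd ((hnone _).1 h) hu
      · cases hval _ _ h; rfl
    have hstep_edg : ∀ e : G.edgeSet, W.edg e ∉ C →
        ∃ u : V, u ∈ (e : Sym2 V) ∧ Dn (W.edg e) = some (W.vert u) := by
      intro e he
      rcases h : Dn (W.edg e) with _ | j
      · exact absurd ((hnone _).1 h) he
      · cases hval _ _ h with
        | ev _ u hu => exact ⟨u, hu, rfl⟩
    have key : ∀ (u : V) (e : G.edgeSet), W.vert u ∉ C →
        Dn (W.edg e) = some (W.vert u) → ∃ b, W.extra u b ∈ C := by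
      intro u e hu hde
      by_contra hx
      push_neg at hx
      have hv : dStep Dn (W.vert u) (W.dum u) := hstep_vert u hu
      have hT : ({W.dum u, W.vert u, W.edg e, W.extra u true, W.extra u false} : Set (W V G))
          ⊆ {i | Relation.ReflTransGen (dStep Dn) i (W.dum u)} := by
        rintro i (rfl | rfl | rfl | rfl | rfl)
        · exact Relation.ReflTransGen.refl
        · exact Relation.ReflTransGen.single hv
        · exact Relation.ReflTransGen.head hde (Relation.ReflTransGen.single hv)
        · exact Relation.ReflTransGen.single (hstep_extra u true (hx true))
        · exact Relation.ReflTransGen.single (hstep_extra u false (hx false))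
      have h5 : ({W.dum u, W.vert u, W.edg e, W.extra u true, W.extra u false} :
          Set (W V G)).ncard = 5 := by
        rw [Set.ncard_insert_of_notMem (by simp), Set.ncard_insert_of_notMem (by simp),
          Set.ncard_insert_of_notMem (by simp), Set.ncard_insert_of_notMem (by simp),
          Set.ncard_singleton]
      have := (h5 ▸ Set.ncard_le_ncard hT (Set.toFinite _)).trans (hpow _ (hdum u))
      omega
    set pickE : G.edgeSet → V := fun e => (e : Sym2 V).out.1 with hpickE
    have hpick : ∀ e : G.edgeSet, pickE e ∈ (e : Sym2 V) := fun e => Sym2.out_fst_mem _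
    set P : V → Prop := fun u => W.vert u ∈ C ∨
        (∃ e : G.edgeSet, W.edg e ∈ C ∧ pickE e = u) ∨
        (W.vert u ∉ C ∧ ∃ e : G.edgeSet, Dn (W.edg e) = some (W.vert u)) with hP
    set S : Finset V := Finset.univ.filter P with hS
    have hmemS : ∀ u, u ∈ S ↔ P u := by intro u; simp [hS]
    refine ⟨S, ?_, ?_⟩
    · -- card bound
      set C1 : Finset (W V G) := C.filter (fun i => wCost i = 1) with hC1
      set g : V → W V G := fun u =>
        if W.vert u ∈ C then W.vert u
        else if h : ∃ e : G.edgeSet, W.edg e ∈ C ∧ pickE e = u then W.edg h.choose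
        else W.extra u (if W.extra u true ∈ C then true else false) with hg
      have hmap : ∀ u ∈ S, g u ∈ C1 := by
        intro u hu
        rw [hmemS] at hu
        simp only [hC1, Finset.mem_filter, hg]
        split_ifs with h1 h2 h3
        · exact ⟨h1, rfl⟩
        · exact ⟨h2.choose_spec.1, rfl⟩
        · exact ⟨h3, rfl⟩
        · rcases hu with hu | hu | hu
          · exact absurd hu h1
          · exact absurd hu h2
          · obtain ⟨e, he⟩ := hu.2
            obtain ⟨b, hb⟩ := key u e hu.1 he
            rcases b with _ | _
            · exact ⟨hb, rfl⟩
            · exact absurd hb h3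
      have hex : ∀ u, (fun w => match w with
          | W.vert v => v
          | W.edg e => pickE e
          | W.dum v => v
          | W.extra v _ => v) (g u) = u := by
        intro u
        simp only [hg]
        split_ifs with h1 h2 h3
        · rfl
        · exact h2.choose_spec.2
        · rfl
        · rfl
      have hinj : Set.InjOn g S := by
        intro u _ u' _ heq
        have h1 := hex u
        rw [heq, hex u'] at h1
        exact h1.symm
      have hcard : S.card ≤ C1.card := Finset.card_le_card_of_injOn g hmap hinj
      have hsum : C1.card = ∑ i ∈ C, wCost i := by
        rw [hC1, Finset.card_filter]
        refine Finset.sum_congr rfl fun i _ => ?_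
        rcases i with u | e | u | ⟨u, b⟩ <;> simp [wCost]
      omega
    · -- cover
      intro e he
      by_cases hC : W.edg (⟨e, he⟩ : G.edgeSet) ∈ C
      · refine ⟨pickE ⟨e, he⟩, ?_, hpick ⟨e, he⟩⟩
        rw [hmemS]
        exact Or.inr (Or.inl ⟨⟨e, he⟩, hC, rfl⟩)
      · obtain ⟨u, hu, hDe⟩ := hstep_edg ⟨e, he⟩ hC
        refine ⟨u, ?_, hu⟩
        rw [hmemS]
        by_cases hv : W.vert u ∈ C
        · exact Or.inl hv
        · exact Or.inr (Or.inr ⟨hv, ⟨e, he⟩, hDe⟩)
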